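/- For every ε > 0, m ≥ 0, every set T ⊂ εℤ², and every point (x,t) ∈ εℤ² with (x,t) ∉ T and t ≥ 2ε: (1) a₁(x,t bypass T; m,ε) = (1/√(1+m²ε²))·(a₁(x+ε,t−ε bypass T; m,ε) + mε·a₂(x+ε,t−ε bypass T; m,ε)); and (2) a₂(x,t bypass T; m,ε) = (1/√(1+m²ε²))·(a₂(x−ε,t−ε bypass T; m,ε) − mε·a₁(x−ε,t−ε bypass T; m,ε)). -/

import Mathlib

open scoped Classical

noncomputable section

/-- The `i`-th move of a checker path encoded as `f : Fin n → Bool`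
(`true` = upwards-right move `(ε,ε)`, `false` = upwards-left move `(−ε,ε)`);
out-of-range indices default to `true`. -/
def fcStep {n : ℕ} (f : Fin n → Bool) (i : ℕ) : Bool :=
  if h : i < n then f ⟨i, h⟩ else true

/-- The number of turns of the checker path `f`. -/
def fcTurns {n : ℕ} (f : Fin n → Bool) : ℕ :=
  ((Finset.range (n - 1)).filter fun i => fcStep f i ≠ fcStep f (i + 1)).card

/-- The position (in units of `ε`) of the checker path `f` after `i` moves,
starting from the origin. -/
def fcPos {n : ℕ} (f : Fin n → Bool) (i : ℕ) : ℤ :=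
  ∑ j ∈ Finset.range i, (if fcStep f j then (1 : ℤ) else -1)

/-- Checker paths from `(0,0)` to `(εx, εn)` whose first step is to `(ε,ε)`. -/
def fcPaths (n : ℕ) (x : ℤ) : Finset (Fin n → Bool) :=
  Finset.univ.filter fun f =>
    (∀ i : Fin n, (i : ℕ) = 0 → f i = true) ∧ fcPos f n = x

/-- The amplitude `a(εx, εn, m, ε)`. -/
def fcAmp (m ε : ℝ) (x : ℤ) (n : ℕ) : ℂ :=
  (((1 + m ^ 2 * ε ^ 2) ^ ((1 - (n : ℝ)) / 2) : ℝ) : ℂ) * Complex.I *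
    ∑ f ∈ fcPaths n x, (-Complex.I * (m * ε)) ^ fcTurns f

/-- The probability `P(εx, εn, m, ε)` to find the electron at `(εx, εn)`. -/
def fcP (m ε : ℝ) (x : ℤ) (n : ℕ) : ℝ := ‖fcAmp m ε x n‖ ^ 2

/-- The amplitude `a(εx, εn bypass T; m, ε)`: as `fcAmp`, but the sum is only over
checker paths avoiding every point of the set `T ⊂ εℤ²` (a point `(X, k)` encodes
the lattice point `(εX, εk)`). -/
def fcAmpBypass (m ε : ℝ) (T : Set (ℤ × ℤ)) (x : ℤ) (n : ℕ) : ℂ :=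
  (((1 + m ^ 2 * ε ^ 2) ^ ((1 - (n : ℝ)) / 2) : ℝ) : ℂ) * Complex.I *
    ∑ f ∈ (fcPaths n x).filter (fun f => ∀ i ≤ n, (fcPos f i, (i : ℤ)) ∉ T),
      (-Complex.I * (m * ε)) ^ fcTurns f


-- auxiliary lemmas
lemma fcStep_snoc_lt {k : ℕ} (g : Fin k → Bool) (b : Bool) {i : ℕ} (hi : i < k) :
    fcStep (Fin.snoc g b : Fin (k+1) → Bool) i = fcStep g i := by
  have h1 : i < k + 1 := Nat.lt_succ_of_lt hi
  simp only [fcStep, dif_pos h1, dif_pos hi]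
  have : (⟨i, h1⟩ : Fin (k+1)) = Fin.castSucc ⟨i, hi⟩ := rfl
  rw [this, Fin.snoc_castSucc]

lemma fcStep_snoc_last {k : ℕ} (g : Fin k → Bool) (b : Bool) :
    fcStep (Fin.snoc g b : Fin (k+1) → Bool) k = b := by
  simp only [fcStep, dif_pos (Nat.lt_succ_self k)]
  have : (⟨k, Nat.lt_succ_self k⟩ : Fin (k+1)) = Fin.last k := rfl
  rw [this, Fin.snoc_last]

lemma fcPos_snoc_le {k : ℕ} (g : Fin k → Bool) (b : Bool) {i : ℕ} (hi : i ≤ k) :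
    fcPos (Fin.snoc g b : Fin (k+1) → Bool) i = fcPos g i := by
  unfold fcPos
  refine Finset.sum_congr rfl fun j hj => ?_
  rw [fcStep_snoc_lt g b (lt_of_lt_of_le (Finset.mem_range.mp hj) hi)]

lemma fcPos_snoc_succ {k : ℕ} (g : Fin k → Bool) (b : Bool) :
    fcPos (Fin.snoc g b : Fin (k+1) → Bool) (k+1)
      = fcPos g k + (if b then 1 else -1) := by
  have h := fcPos_snoc_le g b (le_refl k)
  unfold fcPos at h ⊢
  rw [Finset.sum_range_succ, fcStep_snoc_last, h]

lemma fcTurns_snoc {k : ℕ} (hk : 1 ≤ k) (g : Fin k → Bool) (b : Bool) :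
    fcTurns (Fin.snoc g b : Fin (k+1) → Bool) =
      fcTurns g + (if fcStep g (k-1) = b then 0 else 1) := by
  obtain ⟨j, rfl⟩ : ∃ j, k = j + 1 := ⟨k-1, (Nat.succ_pred_eq_of_pos hk).symm⟩
  simp only [fcTurns, Nat.add_sub_cancel]
  rw [Finset.range_add_one, Finset.filter_insert]
  have hcong : (Finset.range j).filter
      (fun i => fcStep (Fin.snoc g b : Fin (j+1+1) → Bool) i
        ≠ fcStep (Fin.snoc g b : Fin (j+1+1) → Bool) (i+1))
      = (Finset.range j).filter (fun i => fcStep g i ≠ fcStep g (i+1)) := by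
    refine Finset.filter_congr fun i hi => ?_
    have hi' := Finset.mem_range.mp hi
    rw [fcStep_snoc_lt g b (Nat.lt_succ_of_lt hi'), fcStep_snoc_lt g b (Nat.succ_lt_succ hi')]
  rw [fcStep_snoc_lt g b (Nat.lt_succ_self j), fcStep_snoc_last]
  by_cases h : fcStep g j = b
  · rw [if_neg (by simp [h]), hcong, if_pos h]; omega
  · rw [if_pos h, hcong, Finset.card_insert_of_notMem (by simp), if_neg h]

lemma parity_aux (s : ℕ → Bool) : ∀ N : ℕ,
    ((s 0 = s N) ↔ Even (((Finset.range N).filter fun i => s i ≠ s (i+1)).card))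
  | 0 => by simp
  | N+1 => by
    have ih := parity_aux s N
    rw [Finset.range_add_one, Finset.filter_insert]
    by_cases h : s N = s (N+1)
    · rw [if_neg (by simp [h]), ← ih, h]
    · rw [if_pos h, Finset.card_insert_of_notMem (by simp), Nat.even_add_one, ← ih]
      revert h
      cases s 0 <;> cases s N <;> cases s (N+1) <;> simp

lemma fcStep_last_even {k : ℕ} (hk : 1 ≤ k) (g : Fin k → Bool) (h0 : fcStep g 0 = true) :
    (fcStep g (k-1) = true ↔ Even (fcTurns g)) := by
  have := parity_aux (fcStep g) (k-1)
  rw [h0] at this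
  rw [fcTurns, ← this, eq_comm]

lemma w_sq (c : ℝ) : (-Complex.I * (c:ℂ)) ^ 2 = ((-(c^2) : ℝ) : ℂ) := by
  push_cast
  rw [mul_pow, neg_pow, Complex.I_sq]
  ring

lemma w_even {c : ℝ} {t : ℕ} (h : Even t) : ((-Complex.I * (c:ℂ)) ^ t).im = 0 := by
  obtain ⟨j, rfl⟩ := h
  rw [← two_mul, pow_mul, w_sq, ← Complex.ofReal_pow, Complex.ofReal_im]

lemma w_odd {c : ℝ} {t : ℕ} (h : Odd t) : ((-Complex.I * (c:ℂ)) ^ t).re = 0 := by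
  obtain ⟨j, rfl⟩ := h
  rw [pow_add, pow_mul, w_sq, pow_one, ← Complex.ofReal_pow]
  simp [Complex.mul_re, Complex.mul_im]
  left
  rw [show (-(c:ℂ)^2) = ((-(c^2):ℝ):ℂ) by push_cast; ring, ← Complex.ofReal_pow,
    Complex.ofReal_im]

lemma firststep_iff {n : ℕ} (hn : 0 < n) (f : Fin n → Bool) :
    (∀ i : Fin n, (i : ℕ) = 0 → f i = true) ↔ fcStep f 0 = true := by
  constructor
  · intro h
    rw [fcStep, dif_pos hn]
    exact h _ rfl
  · intro h i hi
    have : i = ⟨0, hn⟩ := Fin.ext hi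
    rw [this]
    rwa [fcStep, dif_pos hn] at h

lemma snoc_mem_iff {k : ℕ} (hk : 1 ≤ k) (T : Set (ℤ × ℤ)) (X : ℤ)
    (hT : ((X, ((k:ℤ)+1)) : ℤ × ℤ) ∉ T) (g : Fin k → Bool) (b : Bool) :
    ((Fin.snoc g b : Fin (k+1) → Bool) ∈
        (fcPaths (k+1) X).filter (fun f => ∀ i ≤ k+1, (fcPos f i, (i:ℤ)) ∉ T))
      ↔ g ∈ (fcPaths k (X - (if b then 1 else -1))).filter
          (fun f => ∀ i ≤ k, (fcPos f i, (i:ℤ)) ∉ T) := by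
  simp only [Finset.mem_filter, fcPaths, Finset.mem_univ, true_and]
  rw [firststep_iff (Nat.succ_pos k), firststep_iff (by omega), fcStep_snoc_lt g b (by omega)]
  constructor
  · rintro ⟨⟨h1, h2⟩, h3⟩
    rw [fcPos_snoc_succ] at h2
    refine ⟨⟨h1, by omega⟩, fun i hi => ?_⟩
    have := h3 i (by omega)
    rwa [fcPos_snoc_le g b hi] at this
  · rintro ⟨⟨h1, h2⟩, h3⟩
    refine ⟨⟨h1, by rw [fcPos_snoc_succ]; omega⟩, fun i hi => ?_⟩
    rcases Nat.lt_or_ge i (k+1) with h | h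
    · rw [fcPos_snoc_le g b (by omega)]
      exact h3 i (by omega)
    · have hik : i = k + 1 := le_antisymm hi h
      subst hik
      rw [fcPos_snoc_succ]
      have h4 : fcPos g k + (if b then 1 else -1) = X := by omega
      rw [h4]
      push_cast
      exact hT

lemma sum_expand {α : Type*} [Fintype α] [DecidableEq α] (A : Finset α) (F : α → ℂ) :
    ∑ f ∈ A, F f = ∑ f, if f ∈ A then F f else 0 := by
  rw [Finset.sum_ite_mem, Finset.univ_inter]

lemma sum_split {k : ℕ} (hk : 1 ≤ k) (m ε : ℝ) (T : Set (ℤ × ℤ)) (X : ℤ)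
    (hT : ((X, ((k:ℤ)+1)) : ℤ × ℤ) ∉ T) :
    ∑ f ∈ (fcPaths (k+1) X).filter (fun f => ∀ i ≤ k+1, (fcPos f i, (i:ℤ)) ∉ T),
        (-Complex.I * (m * ε)) ^ fcTurns f
      = (∑ g ∈ (fcPaths k (X-1)).filter (fun f => ∀ i ≤ k, (fcPos f i, (i:ℤ)) ∉ T),
          (-Complex.I * (m * ε)) ^ fcTurns g *
            (if fcStep g (k-1) = true then 1 else -Complex.I * (m * ε)))
        + ∑ g ∈ (fcPaths k (X+1)).filter (fun f => ∀ i ≤ k, (fcPos f i, (i:ℤ)) ∉ T),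
          (-Complex.I * (m * ε)) ^ fcTurns g *
            (if fcStep g (k-1) = false then 1 else -Complex.I * (m * ε)) := by
  set w : ℂ := -Complex.I * (m * ε) with hw
  have key : ∀ (b : Bool) (g : Fin k → Bool),
      (if (Fin.snoc g b : Fin (k+1) → Bool) ∈
          (fcPaths (k+1) X).filter (fun f => ∀ i ≤ k+1, (fcPos f i, (i:ℤ)) ∉ T)
        then w ^ fcTurns (Fin.snoc g b : Fin (k+1) → Bool) else 0)
      = if g ∈ (fcPaths k (X - (if b then 1 else -1))).filter
            (fun f => ∀ i ≤ k, (fcPos f i, (i:ℤ)) ∉ T)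
        then w ^ fcTurns g * (if fcStep g (k-1) = b then 1 else w) else 0 := by
    intro b g
    rw [if_congr (snoc_mem_iff hk T X hT g b) rfl rfl, fcTurns_snoc hk, pow_add]
    by_cases hs : fcStep g (k-1) = b
    · rw [if_pos hs, if_pos hs, pow_zero]
    · rw [if_neg hs, if_neg hs, pow_one]
  rw [sum_expand, ← Equiv.sum_comp (Fin.snocEquiv (fun _ : Fin (k+1) => Bool))
      (fun f => if f ∈ (fcPaths (k+1) X).filter
        (fun f => ∀ i ≤ k+1, (fcPos f i, (i:ℤ)) ∉ T) then w ^ fcTurns f else 0),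
    Fintype.sum_prod_type, Fintype.sum_bool]
  have he : ∀ (b : Bool) (g : Fin k → Bool),
      (Fin.snocEquiv (fun _ : Fin (k+1) => Bool)) (b, g) = Fin.snoc g b := fun _ _ => rfl
  calc (∑ g : Fin k → Bool,
          (if (Fin.snoc g true : Fin (k+1) → Bool) ∈
              (fcPaths (k+1) X).filter (fun f => ∀ i ≤ k+1, (fcPos f i, (i:ℤ)) ∉ T)
            then w ^ fcTurns (Fin.snoc g true : Fin (k+1) → Bool) else 0))
        + (∑ g : Fin k → Bool,
          (if (Fin.snoc g false : Fin (k+1) → Bool) ∈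
              (fcPaths (k+1) X).filter (fun f => ∀ i ≤ k+1, (fcPos f i, (i:ℤ)) ∉ T)
            then w ^ fcTurns (Fin.snoc g false : Fin (k+1) → Bool) else 0))
      = _ := rfl
    _ = _ := by
      rw [Finset.sum_congr rfl (fun g _ => key true g),
        Finset.sum_congr rfl (fun g _ => key false g)]
      congr 1
      · conv_rhs => rw [sum_expand]
        refine Finset.sum_congr rfl fun x _ => ?_
        simp [Finset.mem_filter]
      · conv_rhs => rw [sum_expand]
        refine Finset.sum_congr rfl fun x _ => ?_
        simp [Finset.mem_filter, sub_neg_eq_add]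

lemma St_im {k : ℕ} (hk : 1 ≤ k) (m ε : ℝ) (T : Set (ℤ × ℤ)) (Y : ℤ) :
    (∑ g ∈ ((fcPaths k Y).filter (fun f => ∀ i ≤ k, (fcPos f i, (i:ℤ)) ∉ T)).filter
        (fun g => fcStep g (k-1) = true), (-Complex.I * (↑m * ↑ε)) ^ fcTurns g).im = 0 := by
  rw [Complex.im_sum]
  refine Finset.sum_eq_zero fun g hg => ?_
  rw [Finset.mem_filter, Finset.mem_filter, fcPaths, Finset.mem_filter] at hg
  obtain ⟨⟨⟨-, h0, -⟩, -⟩, hlast⟩ := hg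
  have h0' : fcStep g 0 = true := (firststep_iff (by omega) g).mp h0
  have heven : Even (fcTurns g) := (fcStep_last_even hk g h0').mp hlast
  have hc : (↑m * ↑ε : ℂ) = ((m*ε : ℝ) : ℂ) := by push_cast; ring
  rw [hc]
  exact w_even heven

lemma Sf_re {k : ℕ} (hk : 1 ≤ k) (m ε : ℝ) (T : Set (ℤ × ℤ)) (Y : ℤ) :
    (∑ g ∈ ((fcPaths k Y).filter (fun f => ∀ i ≤ k, (fcPos f i, (i:ℤ)) ∉ T)).filter
        (fun g => ¬(fcStep g (k-1) = true)), (-Complex.I * (↑m * ↑ε)) ^ fcTurns g).re = 0 := by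
  rw [Complex.re_sum]
  refine Finset.sum_eq_zero fun g hg => ?_
  rw [Finset.mem_filter, Finset.mem_filter, fcPaths, Finset.mem_filter] at hg
  obtain ⟨⟨⟨-, h0, -⟩, -⟩, hlast⟩ := hg
  have h0' : fcStep g 0 = true := (firststep_iff (by omega) g).mp h0
  have hodd : Odd (fcTurns g) := Nat.not_even_iff_odd.mp
    (fun he => hlast ((fcStep_last_even hk g h0').mpr he))
  have hc : (↑m * ↑ε : ℂ) = ((m*ε : ℝ) : ℂ) := by push_cast; ring
  rw [hc]
  exact w_odd hodd

def fcSt (m ε : ℝ) (T : Set (ℤ × ℤ)) (k : ℕ) (Y : ℤ) : ℂ :=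
  ∑ g ∈ ((fcPaths k Y).filter (fun f => ∀ i ≤ k, (fcPos f i, (i:ℤ)) ∉ T)).filter
      (fun g => fcStep g (k-1) = true), (-Complex.I * (↑m * ↑ε)) ^ fcTurns g

def fcSf (m ε : ℝ) (T : Set (ℤ × ℤ)) (k : ℕ) (Y : ℤ) : ℂ :=
  ∑ g ∈ ((fcPaths k Y).filter (fun f => ∀ i ≤ k, (fcPos f i, (i:ℤ)) ∉ T)).filter
      (fun g => ¬(fcStep g (k-1) = true)), (-Complex.I * (↑m * ↑ε)) ^ fcTurns g

lemma fcSt_im' {k : ℕ} (hk : 1 ≤ k) (m ε : ℝ) (T : Set (ℤ × ℤ)) (Y : ℤ) :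
    (fcSt m ε T k Y).im = 0 := St_im hk m ε T Y

lemma fcSf_re' {k : ℕ} (hk : 1 ≤ k) (m ε : ℝ) (T : Set (ℤ × ℤ)) (Y : ℤ) :
    (fcSf m ε T k Y).re = 0 := Sf_re hk m ε T Y

lemma amp_decomp (m ε : ℝ) (T : Set (ℤ × ℤ)) (k : ℕ) (Y : ℤ) :
    fcAmpBypass m ε T Y k
      = (((1 + m ^ 2 * ε ^ 2) ^ ((1 - (k : ℝ)) / 2) : ℝ) : ℂ) * Complex.I *
        (fcSt m ε T k Y + fcSf m ε T k Y) := by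
  rw [fcAmpBypass, fcSt, fcSf, Finset.sum_filter_add_sum_filter_not]

lemma amp_step {k : ℕ} (hk : 1 ≤ k) (m ε : ℝ) (T : Set (ℤ × ℤ)) (X : ℤ)
    (hT : ((X, ((k:ℤ)+1)) : ℤ × ℤ) ∉ T) :
    fcAmpBypass m ε T X (k+1)
      = (((1 + m ^ 2 * ε ^ 2) ^ ((1 - ((k+1:ℕ) : ℝ)) / 2) : ℝ) : ℂ) * Complex.I *
        ((fcSt m ε T k (X-1) + (-Complex.I * (↑m * ↑ε)) * fcSf m ε T k (X-1))
          + ((-Complex.I * (↑m * ↑ε)) * fcSt m ε T k (X+1) + fcSf m ε T k (X+1))) := by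
  rw [fcAmpBypass, sum_split hk m ε T X hT]
  congr 1
  congr 1
  · rw [fcSt, fcSf,
      ← Finset.sum_filter_add_sum_filter_not
        ((fcPaths k (X-1)).filter (fun f => ∀ i ≤ k, (fcPos f i, (i:ℤ)) ∉ T))
        (fun g => fcStep g (k-1) = true), Finset.mul_sum]
    congr 1
    · refine Finset.sum_congr rfl fun g hg => ?_
      rw [if_pos (Finset.mem_filter.mp hg).2, mul_one]
    · refine Finset.sum_congr rfl fun g hg => ?_
      rw [if_neg (Finset.mem_filter.mp hg).2, mul_comm]
  · rw [fcSt, fcSf,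
      ← Finset.sum_filter_add_sum_filter_not
        ((fcPaths k (X+1)).filter (fun f => ∀ i ≤ k, (fcPos f i, (i:ℤ)) ∉ T))
        (fun g => fcStep g (k-1) = true), Finset.mul_sum]
    congr 1
    · refine Finset.sum_congr rfl fun g hg => ?_
      have h := (Finset.mem_filter.mp hg).2
      rw [if_neg (by simp [h]), mul_comm]
    · refine Finset.sum_congr rfl fun g hg => ?_
      have h := (Finset.mem_filter.mp hg).2
      rw [if_pos (by simpa using h), mul_one]

/-- Dirac equation for the amplitudes with an avoided set `T`: for a lattice point
`(x,t) = (εX, εn) ∉ T` with `t ≥ 2ε`. -/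
theorem stmt10 (m ε : ℝ) (hε : 0 < ε) (hm : 0 ≤ m) (T : Set (ℤ × ℤ)) (X : ℤ) (n : ℕ)
    (hn : 2 ≤ n) (hT : ((X, (n : ℤ)) : ℤ × ℤ) ∉ T) :
    (fcAmpBypass m ε T X n).re
        = (1 / Real.sqrt (1 + m ^ 2 * ε ^ 2)) *
            ((fcAmpBypass m ε T (X + 1) (n - 1)).re
              + m * ε * (fcAmpBypass m ε T (X + 1) (n - 1)).im) ∧
    (fcAmpBypass m ε T X n).im
        = (1 / Real.sqrt (1 + m ^ 2 * ε ^ 2)) *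
            ((fcAmpBypass m ε T (X - 1) (n - 1)).im
              - m * ε * (fcAmpBypass m ε T (X - 1) (n - 1)).re) := by
  obtain ⟨k, rfl⟩ : ∃ k, n = k + 1 := ⟨n - 1, by omega⟩
  have hk : 1 ≤ k := by omega
  simp only [Nat.add_sub_cancel]
  have hT' : ((X, ((k:ℤ)+1)) : ℤ × ℤ) ∉ T := by push_cast at hT ⊢; exact hT
  set q : ℝ := 1 + m ^ 2 * ε ^ 2 with hqdef
  have hq0 : 0 < q := by positivity
  set A : ℝ := (fcSt m ε T k (X-1)).re with hA
  set B : ℝ := (fcSf m ε T k (X-1)).im with hB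
  set C : ℝ := (fcSt m ε T k (X+1)).re with hC
  set D : ℝ := (fcSf m ε T k (X+1)).im with hD
  have e1 : fcSt m ε T k (X-1) = (A : ℂ) :=
    Complex.ext rfl (by rw [fcSt_im' hk]; simp)
  have e2 : fcSf m ε T k (X-1) = Complex.I * (B : ℂ) :=
    Complex.ext (by rw [fcSf_re' hk]; simp) (by simp [hB])
  have e3 : fcSt m ε T k (X+1) = (C : ℂ) :=
    Complex.ext rfl (by rw [fcSt_im' hk]; simp)
  have e4 : fcSf m ε T k (X+1) = Complex.I * (D : ℂ) :=
    Complex.ext (by rw [fcSf_re' hk]; simp) (by simp [hD])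
  set r : ℝ := q ^ ((1 - (k : ℝ)) / 2) with hr
  have hsq : Real.sqrt q ≠ 0 := by positivity
  have hcr : q ^ ((1 - ((k+1:ℕ) : ℝ)) / 2) = r / Real.sqrt q := by
    have h1 : (1 - ((k+1:ℕ) : ℝ)) / 2 = (1 - (k : ℝ)) / 2 + (-(1/2)) := by
      push_cast; ring
    rw [h1, Real.rpow_add hq0, Real.rpow_neg hq0.le, Real.sqrt_eq_rpow]
    ring
  rw [amp_step hk m ε T X hT', amp_decomp m ε T k (X+1), amp_decomp m ε T k (X-1),
    e1, e2, e3, e4, hcr]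
  constructor
  · simp only [Complex.mul_re, Complex.mul_im, Complex.add_re, Complex.add_im,
      Complex.neg_re, Complex.neg_im, Complex.I_re, Complex.I_im,
      Complex.ofReal_re, Complex.ofReal_im]
    field_simp
    ring
  · simp only [Complex.mul_re, Complex.mul_im, Complex.add_re, Complex.add_im,
      Complex.neg_re, Complex.neg_im, Complex.I_re, Complex.I_im,
      Complex.ofReal_re, Complex.ofReal_im]
    field_simp
    ring
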